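/- For every m ≥ 1, every m×m real matrix A, and every integer r with 1 ≤ r ≤ m, evaluating Newton polynomials at matrices gives χ_{I+A,r}(I+A) = Σ_{j=0}^{r} C(m−1−r+j, j) · χ_{A,r−j}(A), where χ_{A,0}(A) = I; explicitly, χ_{I+A,r}(I+A) = χ_{A,r}(A) + (m−r)χ_{A,r−1}(A) + ⋯ + C(m−2, r−1)χ_{A,1}(A) + C(m−1, r)·I. -/

import Mathlib

open Finset Polynomial

/-- The `r`-th elementary invariant of an `m × m` real matrix `A`:
`ε_r(A) = (−1)^r · (coefficient of X^(m−r) in det(X·I − A))`. -/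
noncomputable def elemInv (m : ℕ) (A : Matrix (Fin m) (Fin m) ℝ) (r : ℕ) : ℝ :=
  (-1 : ℝ) ^ r * (Matrix.charpoly A).coeff (m - r)

/-- The `r`-th Newton polynomial of `A`, `χ_{A,r}(X) = Σ_{k=0}^{r} (−1)^k ε_{r−k}(A) X^k`,
evaluated at the matrix `B`. -/
noncomputable def newtonEval (m : ℕ) (A B : Matrix (Fin m) (Fin m) ℝ) (r : ℕ) :
    Matrix (Fin m) (Fin m) ℝ :=
  ∑ k ∈ Finset.range (r + 1), ((-1 : ℝ) ^ k * elemInv m A (r - k)) • B ^ k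

/-- Triangular double-sum swap. -/
lemma sum_tri {M : Type*} [AddCommMonoid M] (n : ℕ) (f : ℕ → ℕ → M) :
    ∑ a ∈ range (n + 1), ∑ b ∈ range (n + 1 - a), f a b
      = ∑ b ∈ range (n + 1), ∑ a ∈ range (n + 1 - b), f a b := by
  apply Finset.sum_comm'
  intro a b
  simp only [mem_range]
  omega

/-- The key alternating binomial identity. -/
lemma keyBinom : ∀ q t N : ℕ, t + N ≤ q →
    ∑ i ∈ range (N + 1), (-1 : ℤ) ^ i * (q.choose (N - i)) * ((t + i).choose t)
      = ((q - 1 - t).choose N : ℤ) := by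
  intro q
  induction q with
  | zero =>
    intro t N h
    have ht : t = 0 := by omega
    have hN : N = 0 := by omega
    subst ht; subst hN; simp
  | succ q ih =>
    intro t N h
    rcases Nat.eq_zero_or_pos N with hN | hN
    · subst hN; simp
    obtain ⟨N', rfl⟩ : ∃ N', N = N' + 1 := ⟨N - 1, by omega⟩
    rcases eq_or_lt_of_le h with heq | hlt
    · -- t + (N'+1) = q + 1 : sum vanishes
      have hq : q + 1 = t + (N' + 1) := heq.symm
      have hsum : ∑ i ∈ range (N' + 1 + 1), (-1 : ℤ) ^ i * ((q+1).choose (N' + 1 - i)) * ((t + i).choose t)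
          = ((q+1).choose t : ℤ) * ∑ i ∈ range (N' + 1 + 1), (-1 : ℤ) ^ i * ((N' + 1).choose i) := by
        rw [Finset.mul_sum]
        refine Finset.sum_congr rfl fun i hi => ?_
        rw [mem_range] at hi
        have h1 : (q+1).choose (N' + 1 - i) = (q+1).choose (t + i) := by
          rw [← Nat.choose_symm (by omega)]
          congr 1; omega
        have h2 : (q+1).choose (t + i) * ((t + i).choose t) = (q+1).choose t * ((N' + 1).choose i) := by
          rw [Nat.choose_mul (by omega)]
          congr 1
          · congr 1 <;> omega
        have h2' : (((q+1).choose (t + i) : ℤ)) * (((t + i).choose t : ℕ) : ℤ)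
            = (((q+1).choose t : ℕ) : ℤ) * (((N' + 1).choose i : ℕ) : ℤ) := by
          exact_mod_cast congrArg (Nat.cast : ℕ → ℤ) h2
        rw [h1]
        linear_combination ((-1 : ℤ) ^ i) * h2'
      rw [hsum, Int.alternating_sum_range_choose_of_ne (by omega), mul_zero]
      have : q + 1 - 1 - t = N' := by omega
      rw [this, Nat.choose_eq_zero_of_lt (by omega)]
      simp
    · -- t + N ≤ q : Pascal + induction
      have expand : ∀ i ∈ range (N' + 1 + 1),
          (-1 : ℤ) ^ i * ((q+1).choose (N' + 1 - i)) * ((t + i).choose t)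
            = (-1 : ℤ) ^ i * (q.choose (N' + 1 - i)) * ((t + i).choose t)
              + (if i ≤ N' then (-1 : ℤ) ^ i * (q.choose (N' - i)) * ((t + i).choose t) else 0) := by
        intro i hi
        rw [mem_range] at hi
        by_cases hiN : i ≤ N'
        · rw [if_pos hiN]
          have hs : N' + 1 - i = (N' - i) + 1 := by omega
          rw [hs, Nat.choose_succ_succ]
          push_cast
          ring
        · have : i = N' + 1 := by omega
          subst this
          simp
      rw [Finset.sum_congr rfl expand, Finset.sum_add_distrib]
      have htrunc : ∑ i ∈ range (N' + 1 + 1),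
          (if i ≤ N' then (-1 : ℤ) ^ i * (q.choose (N' - i)) * ((t + i).choose t) else 0)
            = ∑ i ∈ range (N' + 1), (-1 : ℤ) ^ i * (q.choose (N' - i)) * ((t + i).choose t) := by
        rw [Finset.sum_range_succ, if_neg (by omega)]
        rw [add_zero]
        refine Finset.sum_congr rfl fun i hi => ?_
        rw [mem_range] at hi
        rw [if_pos (by omega)]
      rw [htrunc, ih t (N' + 1) (by omega), ih t N' (by omega)]
      have h1 : q + 1 - 1 - t = (q - 1 - t) + 1 := by omega
      rw [h1, Nat.choose_succ_succ]
      push_cast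
      ring

/-- The characteristic polynomial of `1 + A` is obtained by the substitution `X ↦ X − 1`. -/
lemma charpoly_one_add (m : ℕ) (A : Matrix (Fin m) (Fin m) ℝ) :
    Matrix.charpoly (1 + A) = (Matrix.charpoly A).comp (X - 1) := by
  have hmap : Matrix.charmatrix (1 + A)
      = (Matrix.charmatrix A).map (aeval (X - 1 : ℝ[X])).toRingHom := by
    ext i j
    by_cases h : i = j
    · subst h
      simp [Matrix.charmatrix_apply_eq, Matrix.add_apply, Matrix.one_apply_eq, map_add, map_one]
      ring
    · simp [Matrix.charmatrix_apply_ne _ _ _ h, Matrix.add_apply, Matrix.one_apply_ne h]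
  rw [Matrix.charpoly, Matrix.charpoly, hmap, ← RingHom.mapMatrix_apply, ← RingHom.map_det]
  simp [aeval_def, Polynomial.comp, Polynomial.algebraMap_eq]

/-- The elementary invariants of `1 + A` in terms of those of `A`. -/
lemma elemInv_one_add (m : ℕ) (A : Matrix (Fin m) (Fin m) ℝ) (r : ℕ) (hrm : r ≤ m) :
    elemInv m (1 + A) r = ∑ s ∈ range (r + 1), (((m - s).choose (r - s) : ℕ) : ℝ) * elemInv m A s := by
  have hdeg : (Matrix.charpoly A).natDegree = m := by
    rw [Matrix.charpoly_natDegree_eq_dim, Fintype.card_fin]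
  have hcomp : (Matrix.charpoly A).comp (X - 1)
      = ∑ e ∈ range (m + 1), C ((Matrix.charpoly A).coeff e) * (X - 1) ^ e := by
    rw [Polynomial.comp, Polynomial.eval₂_eq_sum_range' (p := Matrix.charpoly A) (n := m + 1) C
      (by rw [hdeg]; omega) (X - 1)]
  have hco : ((Matrix.charpoly A).comp (X - 1)).coeff (m - r)
      = ∑ e ∈ range (m + 1), (Matrix.charpoly A).coeff e * ((-1 : ℝ) ^ (e - (m - r)) * (e.choose (m - r))) := by
    rw [hcomp, Polynomial.finset_sum_coeff]
    refine Finset.sum_congr rfl fun e _ => ?_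
    rw [Polynomial.coeff_C_mul]
    congr 1
    have : (X - 1 : ℝ[X]) = X + C (-1 : ℝ) := by simp [sub_eq_add_neg]
    rw [this, Polynomial.coeff_X_add_C_pow]
  have sign : ∀ s : ℕ, s ≤ r → (-1 : ℝ) ^ r * (-1 : ℝ) ^ (r - s) = (-1 : ℝ) ^ s := by
    intro s hs
    have h1 : (-1 : ℝ) ^ (r - s) * (-1 : ℝ) ^ s = (-1 : ℝ) ^ r := by
      rw [← pow_add]; congr 1; omega
    have h3 : (-1 : ℝ) ^ (r - s) * (-1 : ℝ) ^ (r - s) = 1 := by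
      rw [← mul_pow]; norm_num
    calc (-1 : ℝ) ^ r * (-1 : ℝ) ^ (r - s)
        = ((-1 : ℝ) ^ (r - s) * (-1 : ℝ) ^ s) * (-1 : ℝ) ^ (r - s) := by rw [h1]
      _ = ((-1 : ℝ) ^ (r - s) * (-1 : ℝ) ^ (r - s)) * (-1 : ℝ) ^ s := by ring
      _ = (-1 : ℝ) ^ s := by rw [h3, one_mul]
  unfold elemInv
  rw [charpoly_one_add, hco, Finset.mul_sum]
  rw [← Finset.sum_range_reflect]
  have htr : ∀ x ∈ range (m + 1), x ∉ range (r + 1) →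
      (-1 : ℝ) ^ r * ((Matrix.charpoly A).coeff (m + 1 - 1 - x) *
        ((-1 : ℝ) ^ ((m + 1 - 1 - x) - (m - r)) * (((m + 1 - 1 - x).choose (m - r) : ℕ) : ℝ))) = 0 := by
    intro x hx hx'
    rw [mem_range] at hx hx'
    rw [Nat.choose_eq_zero_of_lt (by omega)]
    simp
  rw [← Finset.sum_subset (Finset.range_subset_range.mpr (by omega : r + 1 ≤ m + 1)) htr]
  refine Finset.sum_congr rfl fun s hs => ?_
  rw [mem_range] at hs
  have e1 : m + 1 - 1 - s = m - s := by omega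
  have e2 : (m - s) - (m - r) = r - s := by omega
  have e3 : (m - s).choose (m - r) = (m - s).choose (r - s) := by
    rw [← Nat.choose_symm (by omega : r - s ≤ m - s)]
    congr 1; omega
  rw [e1, e2, e3]
  rw [show (-1 : ℝ) ^ r * ((Matrix.charpoly A).coeff (m - s) *
      ((-1 : ℝ) ^ (r - s) * (((m - s).choose (r - s) : ℕ) : ℝ)))
    = ((-1 : ℝ) ^ r * (-1 : ℝ) ^ (r - s)) * ((Matrix.charpoly A).coeff (m - s) *
        (((m - s).choose (r - s) : ℕ) : ℝ)) from by ring]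
  rw [sign s (by omega)]
  ring

/-- Binomial expansion of `(1 + A) ^ k`. -/
lemma one_add_pow (m k : ℕ) (A : Matrix (Fin m) (Fin m) ℝ) :
    (1 + A) ^ k = ∑ t ∈ range (k + 1), ((k.choose t : ℕ) : ℝ) • A ^ t := by
  rw [add_comm (1 : Matrix (Fin m) (Fin m) ℝ) A, (Commute.one_right A).add_pow]
  refine Finset.sum_congr rfl fun t ht => ?_
  rw [one_pow, mul_one, ← (Nat.cast_commute (k.choose t) (A ^ t)).eq, ← nsmul_eq_mul,
    ← Nat.cast_smul_eq_nsmul ℝ]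

/-- `χ_{I+A,r}(I+A) = Σ_{j=0}^{r} C(m−1−r+j, j) · χ_{A,r−j}(A)`. -/
theorem newtonEval_one_add (m : ℕ) (hm : 1 ≤ m) (A : Matrix (Fin m) (Fin m) ℝ)
    (r : ℕ) (hr1 : 1 ≤ r) (hrm : r ≤ m) :
    newtonEval m (1 + A) (1 + A) r =
      ∑ j ∈ Finset.range (r + 1),
        ((((m : ℤ) - 1 - r + j).toNat.choose j : ℝ)) • newtonEval m A A (r - j) := by
  -- canonical form
  have hR : (∑ j ∈ Finset.range (r + 1),
        ((((m : ℤ) - 1 - r + j).toNat.choose j : ℝ)) • newtonEval m A A (r - j))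
      = ∑ t ∈ range (r + 1), ∑ s ∈ range (r + 1 - t),
          ((-1 : ℝ) ^ t * (((((m : ℤ) - 1 - s - t).toNat.choose (r - s - t)) : ℕ) : ℝ))
            • (elemInv m A s • A ^ t) := by
    have step1 : ∀ j ∈ range (r + 1),
        ((((m : ℤ) - 1 - r + j).toNat.choose j : ℝ)) • newtonEval m A A (r - j)
          = ∑ k ∈ range (r + 1 - j),
              ((((((m : ℤ) - 1 - r + j).toNat.choose j : ℕ)) : ℝ)
                * ((-1 : ℝ) ^ k * elemInv m A (r - j - k))) • A ^ k := by
      intro j hj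
      rw [mem_range] at hj
      rw [newtonEval, Finset.smul_sum]
      rw [show r - j + 1 = r + 1 - j from by omega]
      refine Finset.sum_congr rfl fun k hk => ?_
      rw [smul_smul]
    rw [Finset.sum_congr rfl step1, sum_tri]
    refine Finset.sum_congr rfl fun k hk => ?_
    rw [mem_range] at hk
    rw [show r + 1 - k = (r - k) + 1 from by omega]
    rw [← Finset.sum_range_reflect]
    rw [show (r - k) + 1 = r + 1 - k from by omega]
    refine Finset.sum_congr rfl fun s hs => ?_
    rw [mem_range] at hs
    have hj : r + 1 - k - 1 - s = r - k - s := by omega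
    rw [hj]
    have h1 : r - (r - k - s) - k = s := by omega
    have h2 : ((m : ℤ) - 1 - r + ((r - k - s : ℕ) : ℤ)) = (m : ℤ) - 1 - s - k := by omega
    have h3 : r - k - s = r - s - k := by omega
    rw [h1, h2, h3, smul_smul]
    congr 1
    ring
  have hL : newtonEval m (1 + A) (1 + A) r
      = ∑ t ∈ range (r + 1), ∑ s ∈ range (r + 1 - t),
          ((-1 : ℝ) ^ t * (((((m : ℤ) - 1 - s - t).toNat.choose (r - s - t)) : ℕ) : ℝ))
            • (elemInv m A s • A ^ t) := by
    have step1 : ∀ k ∈ range (r + 1),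
        ((-1 : ℝ) ^ k * elemInv m (1 + A) (r - k)) • (1 + A) ^ k
          = ∑ t ∈ range (k + 1), ∑ s ∈ range (r + 1 - k),
              ((-1 : ℝ) ^ k * (((m - s).choose (r - k - s) : ℕ) : ℝ) * ((k.choose t : ℕ) : ℝ))
                • (elemInv m A s • A ^ t) := by
      intro k hk
      rw [mem_range] at hk
      rw [elemInv_one_add m A (r - k) (by omega), one_add_pow, Finset.smul_sum]
      refine Finset.sum_congr rfl fun t ht => ?_
      rw [smul_smul, Finset.mul_sum, Finset.sum_mul, Finset.sum_smul]
      rw [show r - k + 1 = r + 1 - k from by omega]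
      refine Finset.sum_congr rfl fun s hs => ?_
      rw [smul_smul]
      congr 1
      ring
    rw [newtonEval, Finset.sum_congr rfl step1]
    rw [← Finset.sum_range_reflect]
    -- clean up the reflected index
    have step2 : ∀ k ∈ range (r + 1),
        (∑ t ∈ range ((r + 1 - 1 - k) + 1), ∑ s ∈ range (r + 1 - (r + 1 - 1 - k)),
            ((-1 : ℝ) ^ (r + 1 - 1 - k) * (((m - s).choose (r - (r + 1 - 1 - k) - s) : ℕ) : ℝ)
              * (((r + 1 - 1 - k).choose t : ℕ) : ℝ)) • (elemInv m A s • A ^ t))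
          = ∑ t ∈ range (r + 1 - k), ∑ s ∈ range (k + 1),
              ((-1 : ℝ) ^ (r - k) * (((m - s).choose (k - s) : ℕ) : ℝ)
                * (((r - k).choose t : ℕ) : ℝ)) • (elemInv m A s • A ^ t) := by
      intro k hk
      rw [mem_range] at hk
      rw [show r + 1 - 1 - k = r - k from by omega]
      rw [show (r - k) + 1 = r + 1 - k from by omega]
      rw [show r + 1 - (r - k) = k + 1 from by omega]
      refine Finset.sum_congr rfl fun t ht => Finset.sum_congr rfl fun s hs => ?_
      rw [show r - (r - k) - s = k - s from by omega]
    rw [Finset.sum_congr rfl step2, sum_tri]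
    refine Finset.sum_congr rfl fun t ht => ?_
    rw [mem_range] at ht
    rw [show r + 1 - t = (r - t) + 1 from by omega]
    rw [← Finset.sum_range_reflect]
    have step3 : ∀ k ∈ range ((r - t) + 1),
        (∑ s ∈ range (((r - t) + 1 - 1 - k) + 1),
            ((-1 : ℝ) ^ (r - ((r - t) + 1 - 1 - k)) * (((m - s).choose (((r - t) + 1 - 1 - k) - s) : ℕ) : ℝ)
              * (((r - ((r - t) + 1 - 1 - k)).choose t : ℕ) : ℝ)) • (elemInv m A s • A ^ t))
          = ∑ s ∈ range ((r - t) + 1 - k),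
              ((-1 : ℝ) ^ (t + k) * (((m - s).choose (r - t - k - s) : ℕ) : ℝ)
                * (((t + k).choose t : ℕ) : ℝ)) • (elemInv m A s • A ^ t) := by
      intro k hk
      rw [mem_range] at hk
      rw [show (r - t) + 1 - 1 - k = r - t - k from by omega]
      rw [show (r - t - k) + 1 = (r - t) + 1 - k from by omega]
      rw [show r - (r - t - k) = t + k from by omega]
    rw [Finset.sum_congr rfl step3, sum_tri]
    refine Finset.sum_congr rfl fun s hs => ?_
    rw [mem_range] at hs
    rw [← Finset.sum_smul]
    congr 1
    -- scalar identity via keyBinom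
    have hrange : (r - t) + 1 - s = (r - s - t) + 1 := by omega
    rw [hrange]
    have hsum : ∑ k ∈ range ((r - s - t) + 1),
        ((-1 : ℝ) ^ (t + k) * (((m - s).choose (r - t - k - s) : ℕ) : ℝ)
          * (((t + k).choose t : ℕ) : ℝ))
        = (-1 : ℝ) ^ t * ∑ k ∈ range ((r - s - t) + 1),
            ((-1 : ℝ) ^ k * (((m - s).choose ((r - s - t) - k) : ℕ) : ℝ)
              * (((t + k).choose t : ℕ) : ℝ)) := by
      rw [Finset.mul_sum]
      refine Finset.sum_congr rfl fun k hk => ?_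
      rw [mem_range] at hk
      rw [pow_add, show r - t - k - s = (r - s - t) - k from by omega]
      ring
    rw [hsum]
    congr 1
    have hkey := keyBinom (m - s) t (r - s - t) (by omega)
    have hkeyR : ∑ k ∈ range ((r - s - t) + 1),
        ((-1 : ℝ) ^ k * (((m - s).choose ((r - s - t) - k) : ℕ) : ℝ)
          * (((t + k).choose t : ℕ) : ℝ))
        = (((m - s - 1 - t).choose (r - s - t) : ℕ) : ℝ) := by
      exact_mod_cast congrArg (Int.cast : ℤ → ℝ) hkey
    rw [hkeyR]
    have harg : (m - s - 1 - t).choose (r - s - t)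
        = ((m : ℤ) - 1 - s - t).toNat.choose (r - s - t) := by
      by_cases hN : r - s - t = 0
      · rw [hN, Nat.choose_zero_right, Nat.choose_zero_right]
      · congr 1
        omega
    rw [harg]
  rw [hL, ← hR]
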